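/- (Exact one-step bias discrepancy propagation.) Fix Δt ∈ ℝ and let F : ℝ⁹ → ℝ⁹ be the linear map (ω, v, x) ↦ (ω, v, x + Δt·v), and Φ = Φ_Δt. Let T_k(b̄), Υ(b̄) ∈ SE₂(3), let d_k, δ ∈ ℝ⁹, let Γ be an invertible 5×5 real matrix, and define T_k(b̂) := T_k(b̄) exp_m(d_k^∧) and Υ(b̂) := Υ(b̄) exp_m(δ^∧). Then Γ Φ(T_k(b̂)) Υ(b̂) = (Γ Φ(T_k(b̄)) Υ(b̄)) · exp_m((Ad_{Υ(b̄)⁻¹} F d_k)^∧) · exp_m(δ^∧). -/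

import Mathlib

open Matrix

noncomputable section

abbrev M3 := Matrix (Fin 3) (Fin 3) ℝ
abbrev M5 := Matrix (Fin 5) (Fin 5) ℝ
abbrev V3 := Fin 3 → ℝ
abbrev V9 := V3 × V3 × V3

/-- Skew-symmetric cross-product matrix `(ω)ₓ`. -/
def skew (ω : V3) : M3 := !![0, -ω 2, ω 1; ω 2, 0, -ω 0; -ω 1, ω 0, 0]

/-- 5×5 block matrix `[[A, v, x],[0₁ₓ₃, d, 0],[0₁ₓ₃, 0, e]]`. -/
def blk (A : M3) (v x : V3) (d e : ℝ) : M5 :=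
  !![A 0 0, A 0 1, A 0 2, v 0, x 0;
     A 1 0, A 1 1, A 1 2, v 1, x 1;
     A 2 0, A 2 1, A 2 2, v 2, x 2;
     0, 0, 0, d, 0;
     0, 0, 0, 0, e]

/-- Element of `SE₂(3)` built from rotation `R`, velocity `V`, position `X`. -/
def se23 (R : M3) (V X : V3) : M5 := blk R V X 1 1

/-- The hat map `ξ^∧` of `ξ = (ω, v, x) ∈ ℝ⁹`. -/
def hat (ω v x : V3) : M5 := blk (skew ω) v x 0 0

def hat9 (ξ : V9) : M5 := hat ξ.1 ξ.2.1 ξ.2.2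

def IsSO3 (R : M3) : Prop := Rᵀ * R = 1 ∧ R.det = 1

def IsSE23 (T : M5) : Prop := ∃ R V X, IsSO3 R ∧ T = se23 R V X

/-- Rotation block of a 5×5 matrix. -/
def Rof (T : M5) : M3 := Matrix.of fun i j => T (Fin.castLE (by omega) i) (Fin.castLE (by omega) j)

/-- Velocity column of a 5×5 matrix. -/
def Vof (T : M5) : V3 := fun i => T (Fin.castLE (by omega) i) 3

/-- Position column of a 5×5 matrix. -/
def Xof (T : M5) : V3 := fun i => T (Fin.castLE (by omega) i) 4

/-- Adjoint of `T ∈ SE₂(3)` acting on `ξ = (ω, v, x) ∈ ℝ⁹`: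
  `[[R, 0, 0],[(V)ₓR, R, 0],[(X)ₓR, 0, R]]`. -/
def Ad (T : M5) (ξ : V9) : V9 :=
  (Rof T *ᵥ ξ.1,
   (skew (Vof T) * Rof T) *ᵥ ξ.1 + Rof T *ᵥ ξ.2.1,
   (skew (Xof T) * Rof T) *ᵥ ξ.1 + Rof T *ᵥ ξ.2.2)

/-- `f(T)` : places the velocity column of `T` in the position column. -/
def fmap (T : M5) : M5 := blk 0 0 (Vof T) 0 0

/-- `Φ_t` : maps `[[R,V,X],...]` to `[[R,V,X+tV],...]` (acting on the top three rows). -/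
def Phi (t : ℝ) (T : M5) : M5 :=
  Matrix.of fun i j => if (i : ℕ) < 3 ∧ (j : ℕ) = 4 then T i j + t * T i 3 else T i j

/-- The linear map `F : (ω,v,x) ↦ (ω, v, x + Δt·v)`. -/
def Fmap (Δt : ℝ) (ξ : V9) : V9 := (ξ.1, ξ.2.1, ξ.2.2 + Δt • ξ.2.1)


section AuxStmt16
set_option maxHeartbeats 1000000

def blk5 (A : M3) (v x : V3) (d z e : ℝ) : M5 :=
  !![A 0 0, A 0 1, A 0 2, v 0, x 0;
     A 1 0, A 1 1, A 1 2, v 1, x 1;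
     A 2 0, A 2 1, A 2 2, v 2, x 2;
     0, 0, 0, d, z;
     0, 0, 0, 0, e]

theorem blk5_mul (A B : M3) (v x w y : V3) (d z e c u f : ℝ) :
    blk5 A v x d z e * blk5 B w y c u f
      = blk5 (A * B) (A *ᵥ w + c • v) (A *ᵥ y + u • v + f • x) (d * c) (d * u + z * f) (e * f) := by
  ext i j
  fin_cases i <;> fin_cases j <;>
    simp [blk5, Matrix.mul_apply, Fin.sum_univ_five, mulVec, dotProduct, Fin.sum_univ_three,
      Matrix.vecHead, Matrix.vecTail, Function.comp, Pi.add_apply, Pi.smul_apply,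
      smul_eq_mul] <;> ring

theorem blk5_congr {A A' : M3} {v v' x x' : V3} {d d' z z' e e' : ℝ}
    (hA : A = A') (hv : v = v') (hx : x = x') (hd : d = d') (hz : z = z') (he : e = e') :
    blk5 A v x d z e = blk5 A' v' x' d' z' e' := by
  subst hA hv hx hd hz he; rfl

theorem hat9_eq (ξ : V9) : hat9 ξ = blk5 (skew ξ.1) ξ.2.1 ξ.2.2 0 0 0 := rfl

theorem se23_eq (R : M3) (V X : V3) : se23 R V X = blk5 R V X 1 0 1 := rfl

theorem blk5_one : blk5 1 0 0 1 0 1 = (1 : M5) := by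
  ext i j
  fin_cases i <;> fin_cases j <;>
    simp [blk5, Matrix.one_apply, Matrix.vecHead, Matrix.vecTail]

theorem blk5_zero : blk5 0 0 0 0 0 0 = (0 : M5) := by
  ext i j
  fin_cases i <;> fin_cases j <;>
    simp [blk5, Matrix.vecHead, Matrix.vecTail]

theorem Phi_blk5 (t : ℝ) (A : M3) (v x : V3) (d z e : ℝ) :
    Phi t (blk5 A v x d z e) = blk5 A v (x + t • v) d z e := by
  ext i j
  fin_cases i <;> fin_cases j <;>
    simp [Phi, blk5, Matrix.vecHead, Matrix.vecTail,
      show ((0:Fin 5):ℕ) = 0 from rfl, show ((1:Fin 5):ℕ) = 1 from rfl,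
      show ((2:Fin 5):ℕ) = 2 from rfl, show ((3:Fin 5):ℕ) = 3 from rfl,
      show ((4:Fin 5):ℕ) = 4 from rfl]

theorem Rof_blk5 (A : M3) (v x : V3) (d z e : ℝ) : Rof (blk5 A v x d z e) = A := by
  ext i j
  fin_cases i <;> fin_cases j <;> simp [Rof, blk5] <;> rfl

theorem Vof_blk5 (A : M3) (v x : V3) (d z e : ℝ) : Vof (blk5 A v x d z e) = v := by
  ext i; fin_cases i <;> simp [Vof, blk5] <;> rfl

theorem Xof_blk5 (A : M3) (v x : V3) (d z e : ℝ) : Xof (blk5 A v x d z e) = x := by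
  ext i; fin_cases i <;> simp [Xof, blk5] <;> rfl

theorem skew_neg' (a : V3) : skew (-a) = -skew a := by
  ext i j; fin_cases i <;> fin_cases j <;> simp [skew]

theorem skew_anticomm (a b : V3) : skew a *ᵥ b = -(skew b *ᵥ a) := by
  ext i; fin_cases i <;>
    simp [skew, mulVec, dotProduct, Fin.sum_univ_three, Matrix.vecHead, Matrix.vecTail] <;> ring

theorem skew_conj (A : M3) (ω : V3) :
    Aᵀ * skew (A *ᵥ ω) * A = A.det • skew ω := by
  ext i j
  fin_cases i <;> fin_cases j <;>
    simp [skew, Matrix.mul_apply, Fin.sum_univ_three, mulVec, dotProduct,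
      Matrix.det_fin_three, Matrix.vecHead, Matrix.vecTail, Matrix.transpose_apply] <;> ring

section ExpAux

attribute [local instance] Matrix.linftyOpNormedAddCommGroup Matrix.linftyOpNormedRing
  Matrix.linftyOpNormedAlgebra

theorem left_mul_exp (Q M : M5) (h : Q * M = 0) : Q * NormedSpace.exp M = Q := by
  rw [NormedSpace.exp_eq_tsum ℝ]; beta_reduce
  erw [← (NormedSpace.expSeries_summable' (𝕂 := ℝ) M).tsum_mul_left Q]
  have h2 : ∀ n : ℕ, n ≠ 0 → Q * ((n.factorial : ℝ)⁻¹ • M ^ n) = 0 := by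
    intro n hn
    obtain ⟨m, rfl⟩ := Nat.exists_eq_succ_of_ne_zero hn
    rw [mul_smul_comm, pow_succ', ← mul_assoc, h, zero_mul, smul_zero]
  erw [tsum_eq_single 0 h2]
  simp

end ExpAux

theorem eq_blk5_of_rows (T : M5)
    (h3 : ∀ j, T 3 j = (1 : M5) 3 j) (h4 : ∀ j, T 4 j = (1 : M5) 4 j) :
    T = blk5 (Rof T) (Vof T) (Xof T) 1 0 1 := by
  ext i j
  fin_cases i <;> fin_cases j <;>
    simp [blk5, Rof, Vof, Xof, h3, h4, Matrix.one_apply] <;> rfl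

theorem exp_hat_rows (ξ : V9) :
    ∃ E p q, NormedSpace.exp (hat9 ξ) = blk5 E p q 1 0 1 := by
  have hQM : blk5 0 0 0 1 0 1 * hat9 ξ = 0 := by
    rw [hat9_eq, blk5_mul]
    simpa using blk5_zero
  have hQE := left_mul_exp (blk5 0 0 0 1 0 1) (hat9 ξ) hQM
  set T := NormedSpace.exp (hat9 ξ) with hT
  have hrow : ∀ i j : Fin 5, (blk5 0 0 0 1 0 1 * T) i j = blk5 (0:M3) 0 0 1 0 1 i j := by
    rw [hQE]; intro i j; rfl
  refine ⟨Rof T, Vof T, Xof T, eq_blk5_of_rows T ?_ ?_⟩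
  · intro j
    have := hrow 3 j
    rw [Matrix.mul_apply, Fin.sum_univ_five] at this
    fin_cases j <;>
      simp_all [blk5, Matrix.one_apply, Matrix.vecHead, Matrix.vecTail]
  · intro j
    have := hrow 4 j
    rw [Matrix.mul_apply, Fin.sum_univ_five] at this
    fin_cases j <;>
      simp_all [blk5, Matrix.one_apply, Matrix.vecHead, Matrix.vecTail]

end AuxStmt16

/-- exact one-step bias discrepancy propagation:
`Γ Φ(T_k(b̂)) Υ(b̂) = (Γ Φ(T_k(b̄)) Υ(b̄)) exp_m((Ad_{Υ(b̄)⁻¹} F d_k)^∧) exp_m(δ^∧)`. -/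
theorem stmt_16 (Δt : ℝ) (Tk Υ : M5) (hT : IsSE23 Tk) (hΥ : IsSE23 Υ)
    (Γ : M5) (hΓ : IsUnit Γ) (d δ : V9) :
    Γ * Phi Δt (Tk * NormedSpace.exp (hat9 d)) * (Υ * NormedSpace.exp (hat9 δ))
      = (Γ * Phi Δt Tk * Υ)
          * NormedSpace.exp (hat9 (Ad Υ⁻¹ (Fmap Δt d)))
          * NormedSpace.exp (hat9 δ) := by
  obtain ⟨R, V, X, ⟨hRo, hRd⟩, rfl⟩ := hT
  obtain ⟨S, W, Y, ⟨hSo, hSd⟩, rfl⟩ := hΥ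
  have hRo' : R * Rᵀ = 1 := mul_eq_one_comm.mp hRo
  have hSo' : S * Sᵀ = 1 := mul_eq_one_comm.mp hSo
  -- the shift matrix C and its inverse
  have hCCi : blk5 1 0 0 1 Δt 1 * blk5 1 0 0 1 (-Δt) 1 = (1 : M5) := by
    rw [blk5_mul]; simpa using blk5_one
  have hCiC : blk5 1 0 0 1 (-Δt) 1 * blk5 1 0 0 1 Δt 1 = (1 : M5) := by
    rw [blk5_mul]; simpa using blk5_one
  -- the inverse of Υ
  have hUWi : se23 S W Y * blk5 Sᵀ (-(Sᵀ *ᵥ W)) (-(Sᵀ *ᵥ Y)) 1 0 1 = 1 := by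
    rw [se23_eq, blk5_mul]
    simpa [Matrix.mulVec_neg, Matrix.mulVec_mulVec, hSo'] using blk5_one
  have hWiU : blk5 Sᵀ (-(Sᵀ *ᵥ W)) (-(Sᵀ *ᵥ Y)) 1 0 1 * se23 S W Y = 1 :=
    mul_eq_one_comm.mp hUWi
  have hinv : (se23 S W Y)⁻¹ = blk5 Sᵀ (-(Sᵀ *ᵥ W)) (-(Sᵀ *ᵥ Y)) 1 0 1 :=
    Matrix.inv_eq_right_inv hUWi
  have hskewS : ∀ a : V3, skew (Sᵀ *ᵥ a) = Sᵀ * skew a * S := by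
    intro a
    have key := skew_conj Sᵀ a
    rw [Matrix.transpose_transpose, Matrix.det_transpose, hSd, one_smul] at key
    calc skew (Sᵀ *ᵥ a) = (Sᵀ * S) * skew (Sᵀ *ᵥ a) * (Sᵀ * S) := by
          rw [hSo, one_mul, mul_one]
      _ = Sᵀ * (S * skew (Sᵀ *ᵥ a) * Sᵀ) * S := by simp only [Matrix.mul_assoc]
      _ = Sᵀ * skew a * S := by rw [key]
  have hvec : ∀ a b : V3, (skew (-(Sᵀ *ᵥ b)) * Sᵀ) *ᵥ a = (Sᵀ * skew a) *ᵥ b := by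
    intro a b
    calc (skew (-(Sᵀ *ᵥ b)) * Sᵀ) *ᵥ a
        = -(skew (Sᵀ *ᵥ b) *ᵥ (Sᵀ *ᵥ a)) := by
          rw [skew_neg', Matrix.neg_mul, Matrix.neg_mulVec, ← Matrix.mulVec_mulVec]
      _ = skew (Sᵀ *ᵥ a) *ᵥ (Sᵀ *ᵥ b) := (skew_anticomm _ _).symm
      _ = (Sᵀ * skew a) *ᵥ b := by
          rw [hskewS, Matrix.mulVec_mulVec, Matrix.mul_assoc (Sᵀ * skew a), hSo', Matrix.mul_one]
  have hAd : ∀ η : V9,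
      hat9 (Ad (blk5 Sᵀ (-(Sᵀ *ᵥ W)) (-(Sᵀ *ᵥ Y)) 1 0 1) η)
        = blk5 Sᵀ (-(Sᵀ *ᵥ W)) (-(Sᵀ *ᵥ Y)) 1 0 1 * hat9 η * se23 S W Y := by
    intro η
    simp only [Ad, Rof_blk5, Vof_blk5, Xof_blk5, hat9_eq, se23_eq, blk5_mul]
    simp [hskewS, hvec]
  have hconj : ∀ η : V9,
      NormedSpace.exp (hat9 (Ad (blk5 Sᵀ (-(Sᵀ *ᵥ W)) (-(Sᵀ *ᵥ Y)) 1 0 1) η))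
        = blk5 Sᵀ (-(Sᵀ *ᵥ W)) (-(Sᵀ *ᵥ Y)) 1 0 1 * NormedSpace.exp (hat9 η) * se23 S W Y := by
    intro η
    rw [hAd]
    exact Matrix.exp_units_conj
      (⟨blk5 Sᵀ (-(Sᵀ *ᵥ W)) (-(Sᵀ *ᵥ Y)) 1 0 1, se23 S W Y, hWiU, hUWi⟩ : M5ˣ) (hat9 η)
  have hF : hat9 (Fmap Δt d) = blk5 1 0 0 1 (-Δt) 1 * hat9 d * blk5 1 0 0 1 Δt 1 := by
    simp only [hat9_eq, Fmap, blk5_mul]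
    simp [add_comm]
  have hexpF : NormedSpace.exp (hat9 (Fmap Δt d))
      = blk5 1 0 0 1 (-Δt) 1 * NormedSpace.exp (hat9 d) * blk5 1 0 0 1 Δt 1 := by
    rw [hF]
    exact Matrix.exp_units_conj
      (⟨blk5 1 0 0 1 (-Δt) 1, blk5 1 0 0 1 Δt 1, hCiC, hCCi⟩ : M5ˣ) (hat9 d)
  obtain ⟨E, p, q, hE⟩ := exp_hat_rows d
  have hkey : Phi Δt (se23 R V X * NormedSpace.exp (hat9 d))
      = Phi Δt (se23 R V X)
        * (blk5 1 0 0 1 (-Δt) 1 * NormedSpace.exp (hat9 d) * blk5 1 0 0 1 Δt 1) := by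
    rw [hE, se23_eq]
    simp only [blk5_mul, Phi_blk5]
    simp [Matrix.mulVec_add, Matrix.mulVec_smul]
    exact blk5_congr rfl rfl (by module) rfl rfl rfl
  rw [hinv, hconj, hexpF, hkey]
  have hcancel : ∀ a b : M5, a * se23 S W Y * blk5 Sᵀ (-(Sᵀ *ᵥ W)) (-(Sᵀ *ᵥ Y)) 1 0 1 * b
      = a * b := by
    intro a b
    rw [Matrix.mul_assoc a, hUWi, Matrix.mul_one]
  simp only [← Matrix.mul_assoc]
  rw [hcancel]
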